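/- Let M be a compact metric space and suppose the entropy map H takes at least two distinct values on F(M) (i.e., there exist non-autonomous dynamical systems f, g on M with H(f) ≠ H(g)). Then H : (F(M), τ_prod) → [0,∞] is discontinuous at every point of F(M). -/
import Mathlib


open Filter Topology Set

variable {M : Type*} {N : Type*}

/-- The `n`-th composition `f_i^n = f_{i+n-1} ∘ ⋯ ∘ f_i` of a non-autonomous
dynamical system `f = (f_i)_{i ∈ ℤ}` of homeomorphisms of `M`. -/
def nsIter [TopologicalSpace M] (f : ℤ → M ≃ₜ M) (i : ℤ) : ℕ → M → M
  | 0 => id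
  | n + 1 => (f (i + n)) ∘ nsIter f i n

/-- `K` is an `(n, ε)`-spanning set for `f` at time `i`. -/
def IsSpanningSet [PseudoMetricSpace M] (f : ℤ → M ≃ₜ M) (i : ℤ) (n : ℕ) (ε : ℝ)
    (K : Set M) : Prop :=
  ∀ x : M, ∃ y ∈ K, ∀ j < n, dist (nsIter f i j x) (nsIter f i j y) < ε

/-- `E` is an `(n, ε)`-separated set for `f` at time `i`. -/
def IsSeparatedSet [PseudoMetricSpace M] (f : ℤ → M ≃ₜ M) (i : ℤ) (n : ℕ) (ε : ℝ)
    (E : Set M) : Prop :=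
  ∀ x ∈ E, ∀ y ∈ E, x ≠ y → ∃ j < n, ε < dist (nsIter f i j x) (nsIter f i j y)

/-- `r[n,i](ε,f)`: the smallest cardinality of a finite `(n, ε)`-spanning set at time `i`. -/
noncomputable def rSpan [PseudoMetricSpace M] (f : ℤ → M ≃ₜ M) (i : ℤ) (n : ℕ) (ε : ℝ) : ℕ :=
  sInf {k | ∃ K : Finset M, K.card = k ∧ IsSpanningSet f i n ε ↑K}

/-- `s[n,i](ε,f)`: the largest cardinality of an `(n, ε)`-separated set at time `i`. -/
noncomputable def sSep [PseudoMetricSpace M] (f : ℤ → M ≃ₜ M) (i : ℤ) (n : ℕ) (ε : ℝ) : ℕ :=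
  sSup {k | ∃ E : Finset M, E.card = k ∧ IsSeparatedSet f i n ε ↑E}

/-- `r[i](ε,f) = limsup_{n → ∞} (1/n) log r[n,i](ε,f)`. -/
noncomputable def rGrowth [PseudoMetricSpace M] (f : ℤ → M ≃ₜ M) (i : ℤ) (ε : ℝ) : EReal :=
  Filter.atTop.limsup fun n : ℕ => ((Real.log (rSpan f i n ε) / n : ℝ) : EReal)

/-- `s[i](ε,f) = limsup_{n → ∞} (1/n) log s[n,i](ε,f)`. -/
noncomputable def sGrowth [PseudoMetricSpace M] (f : ℤ → M ≃ₜ M) (i : ℤ) (ε : ℝ) : EReal :=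
  Filter.atTop.limsup fun n : ℕ => ((Real.log (sSep f i n ε) / n : ℝ) : EReal)

/-- The topological entropy `H_i(f) = lim_{ε → 0⁺} r[i](ε,f)`; since `ε ↦ r[i](ε,f)` is
antitone, this one-sided limit equals the supremum over `ε > 0`. -/
noncomputable def nsEntropy [PseudoMetricSpace M] (f : ℤ → M ≃ₜ M) (i : ℤ) : EReal :=
  ⨆ (ε : ℝ) (_ : 0 < ε), rGrowth f i ε

/-- The metric `d⁰(φ,ψ) = sup_x d(φ x, ψ x) + sup_x d(φ⁻¹ x, ψ⁻¹ x)` on the homeomorphisms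
of a compact metric space `M`. -/
noncomputable def dHomeo [PseudoMetricSpace M] (φ ψ : M ≃ₜ M) : ℝ :=
  (⨆ x : M, dist (φ x) (ψ x)) + ⨆ x : M, dist (φ.symm x) (ψ.symm x)

/-- The topology of the metric `d⁰` on `Homeo(M)`, generated by the `d⁰`-balls. -/
noncomputable def homeoTop (M : Type*) [PseudoMetricSpace M] : TopologicalSpace (M ≃ₜ M) :=
  .generateFrom {B | ∃ (φ : M ≃ₜ M) (ε : ℝ), 0 < ε ∧ B = {ψ : M ≃ₜ M | dHomeo φ ψ < ε}}

/-- The product topology `τ_prod` on `F(M) = ∏_{i ∈ ℤ} Homeo(M)`. -/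
noncomputable def prodTop (M : Type*) [PseudoMetricSpace M] :
    TopologicalSpace (ℤ → M ≃ₜ M) :=
  @Pi.topologicalSpace ℤ (fun _ => M ≃ₜ M) (fun _ => homeoTop M)

/-- The strong topology `τ_str` on `F(M)`, generated by the strong basic neighborhoods
`B(f,ε) = {g : d⁰(f_i, g_i) < ε_i for all i}` over all `f` and all sequences of positive
reals `(ε_i)_{i ∈ ℤ}`. -/
noncomputable def strongTop (M : Type*) [PseudoMetricSpace M] :
    TopologicalSpace (ℤ → M ≃ₜ M) :=
  .generateFrom {B | ∃ (f : ℤ → M ≃ₜ M) (ε : ℤ → ℝ), (∀ i : ℤ, 0 < ε i) ∧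
    B = {g : ℤ → M ≃ₜ M | ∀ i : ℤ, dHomeo (f i) (g i) < ε i}}

/-- `CF(M)`: the set of constant families in `F(M)`. -/
def CF (M : Type*) [TopologicalSpace M] : Set (ℤ → M ≃ₜ M) :=
  {f | ∃ φ : M ≃ₜ M, f = fun _ : ℤ => φ}

/-! ### Auxiliary material -/

/-- Bundled version of `nsIter` as a homeomorphism. -/
def nsIterH [TopologicalSpace M] (f : ℤ → M ≃ₜ M) (i : ℤ) : ℕ → M ≃ₜ M
  | 0 => Homeomorph.refl M
  | n + 1 => (nsIterH f i n).trans (f (i + n))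

lemma nsIterH_apply [TopologicalSpace M] (f : ℤ → M ≃ₜ M) (i : ℤ) :
    ∀ (n : ℕ) (x : M), nsIterH f i n x = nsIter f i n x
  | 0, _ => rfl
  | n + 1, x => by
    show f (i + n) (nsIterH f i n x) = f (i + n) (nsIter f i n x)
    rw [nsIterH_apply f i n x]

lemma continuous_nsIter [TopologicalSpace M] (f : ℤ → M ≃ₜ M) (i : ℤ) :
    ∀ n : ℕ, Continuous (nsIter f i n)
  | 0 => continuous_id
  | n + 1 => (f (i + n)).continuous.comp (continuous_nsIter f i n)

lemma nsIter_add [TopologicalSpace M] (f : ℤ → M ≃ₜ M) (i : ℤ) (a : ℕ) :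
    ∀ (b : ℕ) (x : M), nsIter f i (a + b) x = nsIter f (i + a) b (nsIter f i a x)
  | 0, _ => rfl
  | b + 1, x => by
    show f (i + ↑(a + b)) (nsIter f i (a + b) x)
        = f (i + a + b) (nsIter f (i + a) b (nsIter f i a x))
    rw [nsIter_add f i a b x]
    congr 1
    push_cast
    ring_nf

lemma nsIter_congr [TopologicalSpace M] {f g : ℤ → M ≃ₜ M} {i : ℤ}
    (h : ∀ k : ℕ, f (i + k) = g (i + k)) : ∀ (n : ℕ) (x : M), nsIter f i n x = nsIter g i n x
  | 0, _ => rfl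
  | n + 1, x => by
    show f (i + n) (nsIter f i n x) = g (i + n) (nsIter g i n x)
    rw [nsIter_congr h n x, h n]

lemma exists_finite_spanning [MetricSpace M] [CompactSpace M] (f : ℤ → M ≃ₜ M) (i : ℤ) (n : ℕ)
    {ε : ℝ} (hε : 0 < ε) : ∃ K : Finset M, IsSpanningSet f i n ε ↑K := by
  classical
  have hcov : (Set.univ : Set M) ⊆
      ⋃ y : M, ⋂ j ∈ Finset.range n, (nsIter f i j) ⁻¹' Metric.ball (nsIter f i j y) ε := by
    intro x _
    exact Set.mem_iUnion.mpr ⟨x, by simp [hε]⟩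
  obtain ⟨t, ht⟩ := isCompact_univ.elim_finite_subcover _
    (fun y => isOpen_biInter_finset fun j _ =>
      (continuous_nsIter f i j).isOpen_preimage _ Metric.isOpen_ball) hcov
  refine ⟨t, fun x => ?_⟩
  have hx := ht (Set.mem_univ x)
  simp only [Set.mem_iUnion, Set.mem_iInter, Set.mem_preimage, Metric.mem_ball,
    Finset.mem_range] at hx
  obtain ⟨y, hyt, hy⟩ := hx
  exact ⟨y, hyt, fun j hj => hy j hj⟩

lemma exists_card_rSpan [MetricSpace M] [CompactSpace M] (f : ℤ → M ≃ₜ M) (i : ℤ) (n : ℕ)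
    {ε : ℝ} (hε : 0 < ε) :
    ∃ K : Finset M, K.card = rSpan f i n ε ∧ IsSpanningSet f i n ε ↑K := by
  have hne : {k | ∃ K : Finset M, K.card = k ∧ IsSpanningSet f i n ε ↑K}.Nonempty := by
    obtain ⟨K, hK⟩ := exists_finite_spanning f i n hε
    exact ⟨K.card, K, rfl, hK⟩
  obtain ⟨K, hc, hs⟩ := Nat.sInf_mem hne
  exact ⟨K, hc, hs⟩

lemma one_le_rSpan [MetricSpace M] [CompactSpace M] [Nonempty M] (f : ℤ → M ≃ₜ M) (i : ℤ)
    (n : ℕ) {ε : ℝ} (hε : 0 < ε) : 1 ≤ rSpan f i n ε := by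
  obtain ⟨K, hc, hs⟩ := exists_card_rSpan f i n hε
  obtain ⟨y, hy, -⟩ := hs (Classical.arbitrary M)
  rw [← hc]
  exact Finset.card_pos.mpr ⟨y, hy⟩

lemma uc_family [MetricSpace M] [CompactSpace M] (N : ℕ) (ψ : ℕ → M → M)
    (hψ : ∀ j, Continuous (ψ j)) {ε : ℝ} (hε : 0 < ε) :
    ∃ δ : ℝ, 0 < δ ∧ δ ≤ ε ∧
      ∀ j < N, ∀ a b : M, dist a b < δ → dist (ψ j a) (ψ j b) < ε := by
  induction N with
  | zero => exact ⟨ε, hε, le_rfl, fun j hj => absurd hj (Nat.not_lt_zero j)⟩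
  | succ N ih =>
    obtain ⟨δ₁, hδ₁, hδ₁ε, h1⟩ := ih
    obtain ⟨δ₂, hδ₂, h2⟩ := Metric.uniformContinuous_iff.mp
      (CompactSpace.uniformContinuous_of_continuous (hψ N)) ε hε
    refine ⟨min δ₁ δ₂, lt_min hδ₁ hδ₂, (min_le_left _ _).trans hδ₁ε, ?_⟩
    intro j hj a b hab
    rcases Nat.lt_succ_iff_lt_or_eq.mp hj with hj' | rfl
    · exact h1 j hj' a b (hab.trans_le (min_le_left _ _))
    · exact h2 (hab.trans_le (min_le_right _ _))

lemma rSpan_transfer [MetricSpace M] [CompactSpace M] {f g : ℤ → M ≃ₜ M} (N : ℕ)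
    (hfg : ∀ i : ℤ, (N : ℤ) ≤ i → f i = g i) {ε : ℝ} (hε : 0 < ε) :
    ∃ δ : ℝ, 0 < δ ∧ ∀ n, rSpan g 0 n ε ≤ rSpan f 0 n δ := by
  classical
  set T : M ≃ₜ M := (nsIterH g 0 N).trans (nsIterH f 0 N).symm with hT
  have hfgN : ∀ k : ℕ, f ((N : ℤ) + k) = g ((N : ℤ) + k) := fun k =>
    hfg _ (le_add_of_nonneg_right (Int.ofNat_nonneg k))
  have hkey : ∀ j, N ≤ j → ∀ x : M, nsIter g 0 j x = nsIter f 0 j (T x) := by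
    intro j hj x
    obtain ⟨m, rfl⟩ := Nat.exists_eq_add_of_le hj
    have h3 : nsIter f 0 N (T x) = nsIter g 0 N x := by
      rw [← nsIterH_apply, ← nsIterH_apply]
      show (nsIterH f 0 N) (T x) = nsIterH g 0 N x
      simp [hT]
    have h4 : nsIter g (0 + N) m (nsIter g 0 N x) = nsIter f (0 + N) m (nsIter g 0 N x) :=
      nsIter_congr (fun k => by rw [zero_add]; exact (hfgN k).symm) m _
    rw [nsIter_add g 0 N m x, h4, ← h3, ← nsIter_add f 0 N m (T x)]
  have hkey' : ∀ j, N ≤ j → ∀ y : M, nsIter g 0 j (T.symm y) = nsIter f 0 j y := by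
    intro j hj y
    rw [hkey j hj (T.symm y), Homeomorph.apply_symm_apply]
  set ψ : ℕ → M → M := fun j => nsIter g 0 j ∘ ⇑T.symm ∘ ⇑(nsIterH f 0 j).symm with hψ
  have hψc : ∀ j, Continuous (ψ j) := fun j =>
    (continuous_nsIter g 0 j).comp (T.symm.continuous.comp (nsIterH f 0 j).symm.continuous)
  obtain ⟨δ, hδ, hδε, huc⟩ := uc_family N ψ hψc hε
  refine ⟨δ, hδ, fun n => ?_⟩
  obtain ⟨K, hKc, hKs⟩ := exists_card_rSpan f 0 n hδ
  have hspan : IsSpanningSet g 0 n ε ↑(K.image ⇑T.symm) := by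
    intro x
    obtain ⟨y, hyK, hy⟩ := hKs (T x)
    refine ⟨T.symm y, Finset.mem_coe.mpr (Finset.mem_image_of_mem _ hyK), ?_⟩
    intro j hj
    by_cases hjN : N ≤ j
    · rw [hkey j hjN x, hkey' j hjN y]
      exact (hy j hj).trans_le hδε
    · have key := huc j (lt_of_not_ge hjN) (nsIter f 0 j (T x)) (nsIter f 0 j y) (hy j hj)
      have e1 : ψ j (nsIter f 0 j (T x)) = nsIter g 0 j x := by
        simp only [hψ, Function.comp_apply, ← nsIterH_apply, Homeomorph.symm_apply_apply]
      have e2 : ψ j (nsIter f 0 j y) = nsIter g 0 j (T.symm y) := by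
        simp only [hψ, Function.comp_apply, ← nsIterH_apply, Homeomorph.symm_apply_apply]
      rw [← e1, ← e2]
      exact key
  calc rSpan g 0 n ε ≤ (K.image ⇑T.symm).card := Nat.sInf_le ⟨K.image ⇑T.symm, rfl, hspan⟩
    _ ≤ K.card := Finset.card_image_le
    _ = rSpan f 0 n δ := hKc

lemma nsEntropy_le_of_tail [MetricSpace M] [CompactSpace M] [Nonempty M] {f g : ℤ → M ≃ₜ M}
    (N : ℕ) (hfg : ∀ i : ℤ, (N : ℤ) ≤ i → f i = g i) : nsEntropy g 0 ≤ nsEntropy f 0 := by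
  refine iSup₂_le fun ε hε => ?_
  obtain ⟨δ, hδ, hle⟩ := rSpan_transfer N hfg hε
  refine le_trans ?_ (le_iSup₂ (f := fun δ (_ : 0 < δ) => rGrowth f 0 δ) δ hδ)
  refine Filter.limsup_le_limsup (Filter.Eventually.of_forall fun n => ?_)
  apply EReal.coe_le_coe_iff.mpr
  have h1 : (1 : ℝ) ≤ (rSpan g 0 n ε : ℝ) := by exact_mod_cast one_le_rSpan g 0 n hε
  have h2 : (rSpan g 0 n ε : ℝ) ≤ (rSpan f 0 n δ : ℝ) := by exact_mod_cast hle n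
  exact div_le_div_of_nonneg_right
    (Real.log_le_log (lt_of_lt_of_le one_pos h1) h2) (Nat.cast_nonneg n)

lemma nsEntropy_eq_of_tail [MetricSpace M] [CompactSpace M] [Nonempty M] {f g : ℤ → M ≃ₜ M}
    (N : ℕ) (hfg : ∀ i : ℤ, (N : ℤ) ≤ i → f i = g i) : nsEntropy f 0 = nsEntropy g 0 :=
  le_antisymm (nsEntropy_le_of_tail N fun i hi => (hfg i hi).symm)
    (nsEntropy_le_of_tail N hfg)

/-- if the entropy map `H` takes at least two distinct values on `F(M)`
(`M` a compact metric space), then `H : (F(M), τ_prod) → [0,∞]` is discontinuous at every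
point of `F(M)`. (Recall `H_i(f)` is independent of `i`; `H(f) = H_0(f)` is the common
value.) -/
theorem nsEntropy_discontinuous_prodTop [MetricSpace M] [CompactSpace M]
    (hH : ∃ f g : ℤ → M ≃ₜ M, nsEntropy f 0 ≠ nsEntropy g 0) :
    ∀ f : ℤ → M ≃ₜ M,
      ¬ @ContinuousAt (ℤ → M ≃ₜ M) EReal (prodTop M) inferInstance
        (fun g : ℤ → M ≃ₜ M => nsEntropy g 0) f := by
  classical
  intro f₀ hcont
  obtain ⟨f, g, hfg⟩ := hH
  rcases isEmpty_or_nonempty M with hM | hM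
  · exact hfg (by rw [show f = g from funext fun i =>
      Homeomorph.ext fun x => hM.elim x])
  have hne : ∃ h : ℤ → M ≃ₜ M, nsEntropy h 0 ≠ nsEntropy f₀ 0 := by
    by_cases hc : nsEntropy f 0 = nsEntropy f₀ 0
    · exact ⟨g, fun hg => hfg (hc.trans hg.symm)⟩
    · exact ⟨f, hc⟩
  obtain ⟨h, hha⟩ := hne
  letI : TopologicalSpace (M ≃ₜ M) := homeoTop M
  have hV : {x : EReal | x ≠ nsEntropy h 0} ∈ 𝓝 (nsEntropy f₀ 0) :=
    isOpen_ne.mem_nhds hha.symm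
  obtain ⟨U, hUsub, hUopen, hfU⟩ := mem_nhds_iff.mp (hcont hV)
  obtain ⟨I, u, hu, hsub⟩ := (isOpen_pi_iff.mp hUopen) f₀ hfU
  set N : ℕ := (I.sup fun i => i.toNat) + 1 with hN
  set h' : ℤ → M ≃ₜ M := fun i => if i < (N : ℤ) then f₀ i else h i with hh'
  have hIN : ∀ i ∈ I, i < (N : ℤ) := by
    intro i hi
    calc i ≤ (i.toNat : ℤ) := Int.self_le_toNat i
      _ ≤ ((I.sup fun i => i.toNat : ℕ) : ℤ) := by
          exact_mod_cast Finset.le_sup (f := fun i : ℤ => i.toNat) hi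
      _ < (N : ℤ) := by exact_mod_cast Nat.lt_succ_self _
  have h'mem : h' ∈ U := by
    apply hsub
    intro i hi
    have : h' i = f₀ i := if_pos (hIN i hi)
    rw [this]
    exact (hu i hi).2
  have htail : ∀ i : ℤ, (N : ℤ) ≤ i → h' i = h i := fun i hi => if_neg (not_lt.mpr hi)
  exact (hUsub h'mem) (nsEntropy_eq_of_tail N htail)
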